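/- Let Ω ⊂ ℂ be open, L ⊂ Ω compact, K ⊂ ℂ \ Ω compact, (p,q) ∈ ℕ², j, s ≥ 1, and let f_j be a fixed polynomial. Then the set F = { f ∈ H(Ω) : f ∈ D_{p,q}(ζ) for all ζ ∈ L and sup_{ζ∈L, z∈K} |[p/q]_{f,ζ}(z) − f_j(z)| < 1/s } is open in H(Ω). -/

import Mathlib

noncomputable def aZ (a : ℕ → ℂ) (k : ℤ) : ℂ := if k < 0 then 0 else a k.toNat

noncomputable def hankelDet (a : ℕ → ℂ) (p q : ℕ) : ℂ :=
  Matrix.det (Matrix.of fun i j : Fin q => aZ a ((p : ℤ) - q + 1 + (i : ℕ) + (j : ℕ)))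

noncomputable def Spoly (a : ℕ → ℂ) (ζ : ℂ) (k : ℤ) : Polynomial ℂ :=
  if k < 0 then 0 else
    ∑ v ∈ Finset.range (k.toNat + 1), Polynomial.C (a v) * (Polynomial.X - Polynomial.C ζ) ^ v

noncomputable def padeDenomPoly (a : ℕ → ℂ) (ζ : ℂ) (p q : ℕ) : Polynomial ℂ :=
  Matrix.det (Matrix.of fun i j : Fin (q + 1) =>
    if (i : ℕ) = 0 then (Polynomial.X - Polynomial.C ζ) ^ (q - (j : ℕ))
    else Polynomial.C (aZ a ((p : ℤ) - q + (i : ℕ) + (j : ℕ))))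

noncomputable def padeNumPoly (a : ℕ → ℂ) (ζ : ℂ) (p q : ℕ) : Polynomial ℂ :=
  Matrix.det (Matrix.of fun i j : Fin (q + 1) =>
    if (i : ℕ) = 0 then
      (Polynomial.X - Polynomial.C ζ) ^ (q - (j : ℕ)) * Spoly a ζ ((p : ℤ) - q + (j : ℕ))
    else Polynomial.C (aZ a ((p : ℤ) - q + (i : ℕ) + (j : ℕ))))

noncomputable def tc (f : ℂ → ℂ) (ζ : ℂ) (v : ℕ) : ℂ := iteratedDeriv v f ζ / (v.factorial : ℂ)

noncomputable def padeVal (f : ℂ → ℂ) (ζ : ℂ) (p q : ℕ) (z : ℂ) : ℂ :=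
  (padeNumPoly (tc f ζ) ζ p q).eval z / (padeDenomPoly (tc f ζ) ζ p q).eval z

noncomputable def ratSeries (A B : Polynomial ℂ) (ζ : ℂ) : PowerSeries ℂ :=
  ((Polynomial.taylor ζ A : Polynomial ℂ) : PowerSeries ℂ) *
    ((Polynomial.taylor ζ B : Polynomial ℂ) : PowerSeries ℂ)⁻¹

def IsPade (a : ℕ → ℂ) (ζ : ℂ) (p q : ℕ) (A B : Polynomial ℂ) : Prop :=
  A.degree ≤ (p : ℕ) ∧ B.degree ≤ (q : ℕ) ∧ B.eval ζ = 1 ∧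
    ∀ v ≤ p + q, PowerSeries.coeff v (ratSeries A B ζ) = a v

/-- Membership in the set `F(Ω, K, L, p, q, j, s)`: `f` is holomorphic on `Ω`, lies in
`D_{p,q}(ζ)` for all `ζ ∈ L`, its Padé denominators have no zeros on `K`, and
`sup_{ζ∈L, z∈K} |[p/q]_{f,ζ}(z) − f_j(z)| < 1/s`. -/
def memF (Ω L K : Set ℂ) (p q s : ℕ) (fj : Polynomial ℂ) (f : ℂ → ℂ) : Prop :=
  DifferentiableOn ℂ f Ω ∧
  (∀ ζ ∈ L, hankelDet (tc f ζ) p q ≠ 0) ∧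
  (∀ ζ ∈ L, ∀ z ∈ K, (padeDenomPoly (tc f ζ) ζ p q).eval z ≠ 0) ∧
  ∃ b : ℝ, b < 1 / (s : ℝ) ∧
    ∀ ζ ∈ L, ∀ z ∈ K, ‖padeVal f ζ p q z - fj.eval z‖ ≤ b


open Metric Set

namespace FOpenAux

/-- Extend a finite vector of coefficients to `ℕ → ℂ`. -/
noncomputable def avec (N : ℕ) (c : Fin (N + 1) → ℂ) : ℕ → ℂ :=
  fun v => if h : v < N + 1 then c ⟨v, h⟩ else 0

lemma avec_eq (N : ℕ) (c : ℕ → ℂ) {v : ℕ} (hv : v ≤ N) :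
    avec N (fun i : Fin (N + 1) => c i) v = c v := by
  simp [avec, Nat.lt_succ_of_le hv]

lemma aZ_congr {a b : ℕ → ℂ} {N : ℕ} (h : ∀ v ≤ N, a v = b v) {k : ℤ} (hk : k ≤ N) :
    aZ a k = aZ b k := by
  unfold aZ; split
  · rfl
  · exact h k.toNat (by omega)

lemma hankelDet_congr {a b : ℕ → ℂ} {p q : ℕ} (h : ∀ v ≤ p + q, a v = b v) :
    hankelDet a p q = hankelDet b p q := by
  unfold hankelDet
  congr 1
  ext i j
  simp only [Matrix.of_apply]
  exact aZ_congr h (by have := i.2; have := j.2; push_cast; omega)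

lemma Spoly_congr {a b : ℕ → ℂ} {N : ℕ} (h : ∀ v ≤ N, a v = b v) {ζ : ℂ} {k : ℤ}
    (hk : k ≤ N) : Spoly a ζ k = Spoly b ζ k := by
  unfold Spoly; split
  · rfl
  · next hneg =>
    refine Finset.sum_congr rfl fun v hv => ?_
    rw [Finset.mem_range] at hv
    rw [h v (by omega)]

lemma padeDenomPoly_congr {a b : ℕ → ℂ} {p q : ℕ} (h : ∀ v ≤ p + q, a v = b v) (ζ : ℂ) :
    padeDenomPoly a ζ p q = padeDenomPoly b ζ p q := by
  unfold padeDenomPoly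
  congr 1
  ext i j
  simp only [Matrix.of_apply]
  split
  · rfl
  · rw [aZ_congr h (by have := i.2; have := j.2; push_cast; omega)]

lemma padeNumPoly_congr {a b : ℕ → ℂ} {p q : ℕ} (h : ∀ v ≤ p + q, a v = b v) (ζ : ℂ) :
    padeNumPoly a ζ p q = padeNumPoly b ζ p q := by
  unfold padeNumPoly
  congr 1
  ext i j
  simp only [Matrix.of_apply]
  split
  · rw [Spoly_congr h (by have := j.2; push_cast; omega)]
  · rw [aZ_congr h (by have := i.2; have := j.2; push_cast; omega)]

end FOpenAux

namespace FOpenAux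

lemma Spoly_eval (a : ℕ → ℂ) (ζ z : ℂ) (k : ℤ) :
    (Spoly a ζ k).eval z =
      if k < 0 then 0 else ∑ v ∈ Finset.range (k.toNat + 1), a v * (z - ζ) ^ v := by
  unfold Spoly
  split
  · simp
  · simp [Polynomial.eval_finset_sum]

lemma padeDenomPoly_eval (a : ℕ → ℂ) (ζ z : ℂ) (p q : ℕ) :
    (padeDenomPoly a ζ p q).eval z =
      Matrix.det (Matrix.of fun i j : Fin (q + 1) =>
        if (i : ℕ) = 0 then (z - ζ) ^ (q - (j : ℕ))
        else aZ a ((p : ℤ) - q + (i : ℕ) + (j : ℕ))) := by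
  unfold padeDenomPoly
  rw [← Polynomial.coe_evalRingHom, RingHom.map_det]
  congr 1
  ext i j
  simp only [RingHom.mapMatrix_apply, Matrix.map_apply, Matrix.of_apply]
  by_cases hi : (i : ℕ) = 0 <;> simp [hi]

lemma padeNumPoly_eval (a : ℕ → ℂ) (ζ z : ℂ) (p q : ℕ) :
    (padeNumPoly a ζ p q).eval z =
      Matrix.det (Matrix.of fun i j : Fin (q + 1) =>
        if (i : ℕ) = 0 then
          (z - ζ) ^ (q - (j : ℕ)) *
            (if ((p : ℤ) - q + (j : ℕ)) < 0 then 0 else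
              ∑ v ∈ Finset.range (((p : ℤ) - q + (j : ℕ)).toNat + 1), a v * (z - ζ) ^ v)
        else aZ a ((p : ℤ) - q + (i : ℕ) + (j : ℕ))) := by
  unfold padeNumPoly
  rw [← Polynomial.coe_evalRingHom, RingHom.map_det]
  congr 1
  ext i j
  simp only [RingHom.mapMatrix_apply, Matrix.map_apply, Matrix.of_apply]
  by_cases hi : (i : ℕ) = 0 <;> simp [hi, Spoly_eval]

lemma continuous_aZ_avec (N : ℕ) (k : ℤ) :
    Continuous fun c : Fin (N + 1) → ℂ => aZ (avec N c) k := by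
  unfold aZ avec
  by_cases hk : k < 0
  · simpa [hk] using continuous_const
  · simp only [if_neg hk]
    by_cases h2 : k.toNat < N + 1
    · simpa [h2] using continuous_apply (⟨k.toNat, h2⟩ : Fin (N + 1))
    · simpa [h2] using continuous_const

lemma continuous_avec (N v : ℕ) :
    Continuous fun c : Fin (N + 1) → ℂ => avec N c v := by
  unfold avec
  by_cases h2 : v < N + 1
  · simpa [h2] using continuous_apply (⟨v, h2⟩ : Fin (N + 1))
  · simpa [h2] using continuous_const

lemma continuous_HF (N p q : ℕ) :
    Continuous fun c : Fin (N + 1) → ℂ => hankelDet (avec N c) p q := by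
  unfold hankelDet
  exact Continuous.matrix_det (continuous_matrix fun i j => by
    simpa using continuous_aZ_avec N _)

lemma continuous_DF (N p q : ℕ) :
    Continuous fun x : (Fin (N + 1) → ℂ) × ℂ × ℂ =>
      (padeDenomPoly (avec N x.1) x.2.1 p q).eval x.2.2 := by
  simp only [padeDenomPoly_eval]
  refine Continuous.matrix_det (continuous_matrix fun i j => ?_)
  simp only [Matrix.of_apply]
  by_cases hi : (i : ℕ) = 0
  · simp only [hi, if_true, if_pos]
    fun_prop
  · simp only [if_neg hi]
    exact (continuous_aZ_avec N _).comp continuous_fst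

lemma continuous_NF (N p q : ℕ) :
    Continuous fun x : (Fin (N + 1) → ℂ) × ℂ × ℂ =>
      (padeNumPoly (avec N x.1) x.2.1 p q).eval x.2.2 := by
  simp only [padeNumPoly_eval]
  refine Continuous.matrix_det (continuous_matrix fun i j => ?_)
  simp only [Matrix.of_apply]
  by_cases hi : (i : ℕ) = 0
  · simp only [hi, if_true, if_pos]
    refine Continuous.mul (by fun_prop) ?_
    by_cases hneg : ((p : ℤ) - q + (j : ℕ)) < 0
    · simpa [hneg] using continuous_const
    · simp only [if_neg hneg]
      refine continuous_finset_sum _ fun v _ => ?_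
      exact ((continuous_avec N v).comp continuous_fst).mul (by fun_prop)
  · simp only [if_neg hi]
    exact (continuous_aZ_avec N _).comp continuous_fst

end FOpenAux

namespace FOpenAux

open Metric

lemma iteratedDeriv_within_open {f : ℂ → ℂ} {s : Set ℂ} (hs : IsOpen s) {x : ℂ}
    (hx : x ∈ s) (n : ℕ) : iteratedDerivWithin n f s x = iteratedDeriv n f x := by
  rw [iteratedDerivWithin_eq_iteratedFDerivWithin, iteratedDeriv_eq_iteratedFDeriv,
    iteratedFDerivWithin_of_isOpen n hs hx]

lemma tc_continuousOn {f : ℂ → ℂ} {Ω : Set ℂ} (hΩ : IsOpen Ω)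
    (hf : DifferentiableOn ℂ f Ω) (v : ℕ) :
    ContinuousOn (fun ζ => tc f ζ v) Ω := by
  have h0 : ContDiffOn ℂ (v : WithTop ℕ∞) f Ω := hf.contDiffOn hΩ
  have h1 : ContinuousOn (iteratedDerivWithin v f Ω) Ω :=
    h0.continuousOn_iteratedDerivWithin le_rfl hΩ.uniqueDiffOn
  have h2 : ContinuousOn (iteratedDeriv v f) Ω :=
    h1.congr fun x hx => (iteratedDeriv_within_open hΩ hx v).symm
  exact h2.div_const _

lemma tc_sub {f g : ℂ → ℂ} {Ω : Set ℂ} (hΩ : IsOpen Ω) (hf : DifferentiableOn ℂ f Ω)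
    (hg : DifferentiableOn ℂ g Ω) {ζ : ℂ} (hζ : ζ ∈ Ω) (v : ℕ) :
    tc f ζ v - tc g ζ v = tc (fun z => f z - g z) ζ v := by
  unfold tc
  rw [div_sub_div_same]
  congr 1
  have h1 : iteratedDerivWithin v (f - g) Ω ζ =
      iteratedDerivWithin v f Ω ζ - iteratedDerivWithin v g Ω ζ :=
    iteratedDerivWithin_sub hζ hΩ.uniqueDiffOn
      (hf.contDiffOn (n := (v : WithTop ℕ∞)) hΩ ζ hζ) (hg.contDiffOn (n := (v : WithTop ℕ∞)) hΩ ζ hζ)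
  have h2 : (fun z => f z - g z) = f - g := rfl
  rw [h2, ← iteratedDeriv_within_open hΩ hζ v, ← iteratedDeriv_within_open hΩ hζ v,
    ← iteratedDeriv_within_open hΩ hζ v (f := f - g), h1]

lemma tc_bound {h : ℂ → ℂ} {ζ : ℂ} {r ε : ℝ} (hr : 0 < r)
    (hd : DifferentiableOn ℂ h (closedBall ζ r))
    (hε : ∀ z ∈ closedBall ζ r, ‖h z‖ ≤ ε) (v : ℕ) :
    ‖tc h ζ v‖ ≤ ε * r⁻¹ ^ v := by
  have hε0 : 0 ≤ ε := le_trans (norm_nonneg _) (hε ζ (mem_closedBall_self hr.le))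
  set R : NNReal := ⟨r, hr.le⟩ with hR
  have hRr : (R : ℝ) = r := rfl
  have hR0 : 0 < R := by exact_mod_cast hr
  have hps : HasFPowerSeriesOnBall h (cauchyPowerSeries h ζ R) ζ R :=
    DifferentiableOn.hasFPowerSeriesOnBall (by rw [hRr]; exact hd) hR0
  have hfac : (v.factorial : ℕ) • ((cauchyPowerSeries h ζ R v) fun _ => (1 : ℂ)) =
      iteratedFDeriv ℂ v h ζ fun _ => (1 : ℂ) := hps.factorial_smul 1 v
  have hiter : iteratedDeriv v h ζ = (v.factorial : ℂ) * ((cauchyPowerSeries h ζ R v) fun _ => (1 : ℂ)) := by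
    have h3 : iteratedFDeriv ℂ v h ζ (fun _ => (1 : ℂ)) = iteratedDeriv v h ζ := by
      rw [iteratedFDeriv_apply_eq_iteratedDeriv_mul_prod]
      simp
    rw [← h3, ← hfac, nsmul_eq_mul]
  have hnorm1 : ‖(cauchyPowerSeries h ζ R v) fun _ => (1 : ℂ)‖ ≤ ‖cauchyPowerSeries h ζ R v‖ := by
    have := (cauchyPowerSeries h ζ R v).le_opNorm fun _ => (1 : ℂ)
    simpa using this
  have hint : (∫ θ : ℝ in (0)..2 * Real.pi, ‖h (circleMap ζ R θ)‖) ≤ 2 * Real.pi * ε := by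
    have hcont : Continuous fun θ : ℝ => ‖h (circleMap ζ (R : ℝ) θ)‖ := by
      refine Continuous.norm (ContinuousOn.comp_continuous hd.continuousOn
        (continuous_circleMap ζ (R : ℝ)) fun θ => ?_)
      rw [hRr]
      exact sphere_subset_closedBall (circleMap_mem_sphere ζ hr.le θ)
    calc (∫ θ : ℝ in (0)..2 * Real.pi, ‖h (circleMap ζ R θ)‖)
        ≤ ∫ _ : ℝ in (0)..2 * Real.pi, ε := by
          refine intervalIntegral.integral_mono_on Real.two_pi_pos.le
            (hcont.intervalIntegrable _ _) (intervalIntegrable_const) fun θ _ => ?_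
          refine hε _ ?_
          rw [hRr]
          exact sphere_subset_closedBall (circleMap_mem_sphere ζ hr.le θ)
      _ = 2 * Real.pi * ε := by simp [mul_comm]
  have hcoef : ‖cauchyPowerSeries h ζ R v‖ ≤ ε * r⁻¹ ^ v := by
    refine le_trans (norm_cauchyPowerSeries_le h ζ R v) ?_
    have habs : |(R : ℝ)| = r := by rw [hRr, abs_of_pos hr]
    rw [habs]
    refine mul_le_mul_of_nonneg_right ?_ (by positivity)
    rw [inv_mul_le_iff₀ Real.two_pi_pos]
    linarith [hint]
  have hv : (0 : ℝ) < (v.factorial : ℝ) := by positivity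
  calc ‖tc h ζ v‖ = ‖iteratedDeriv v h ζ‖ / (v.factorial : ℝ) := by
        unfold tc
        rw [norm_div]
        congr 1
        simp
    _ = ‖(cauchyPowerSeries h ζ R v) fun _ => (1 : ℂ)‖ * (v.factorial : ℝ) / (v.factorial : ℝ) := by
        rw [hiter, norm_mul]
        simp [mul_comm]
    _ = ‖(cauchyPowerSeries h ζ R v) fun _ => (1 : ℂ)‖ := by
        field_simp
    _ ≤ ε * r⁻¹ ^ v := le_trans hnorm1 hcoef

end FOpenAux

open Metric Set FOpenAux

/-- The set `F(Ω, K, L, p, q, j, s)` is open in `H(Ω)` for the topology of uniform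
convergence on compact subsets of `Ω`, expressed via the basic neighborhoods of that
topology. -/
theorem F_is_open (Ω L K : Set ℂ) (hΩ : IsOpen Ω)
    (hL : IsCompact L) (hLΩ : L ⊆ Ω) (hK : IsCompact K) (hKΩ : K ⊆ Ωᶜ)
    (p q s : ℕ) (hs : 1 ≤ s) (fj : Polynomial ℂ) :
    ∀ f : ℂ → ℂ, memF Ω L K p q s fj f →
      ∃ Lt : Set ℂ, IsCompact Lt ∧ Lt ⊆ Ω ∧
        ∃ a > (0 : ℝ), ∀ g : ℂ → ℂ, DifferentiableOn ℂ g Ω →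
          (∀ z ∈ Lt, ‖f z - g z‖ < a) → memF Ω L K p q s fj g := by
  intro f hf
  obtain ⟨hfd, hH, hD, b, hb, hsup⟩ := hf
  obtain ⟨r, hr0, hLt⟩ := hL.exists_cthickening_subset_open hΩ hLΩ
  refine ⟨Metric.cthickening r L, hL.cthickening, hLt, ?_⟩
  set N := p + q with hN
  set t : ℝ := (b + 1 / (s : ℝ)) / 2 with ht
  have htb : b < t := by rw [ht]; linarith
  have hts : t < 1 / (s : ℝ) := by rw [ht]; linarith
  -- coefficient vector of f
  set cvec : ℂ → (Fin (N + 1) → ℂ) := fun ζ v => tc f ζ (v : ℕ) with hcvec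
  have hcvecCont : ContinuousOn cvec Ω := by
    rw [continuousOn_pi]
    exact fun v => tc_continuousOn hΩ hfd v
  have hagree : ∀ h' : ℂ → ℂ, ∀ ζ : ℂ, ∀ v ≤ p + q,
      avec N (fun i : Fin (N + 1) => tc h' ζ (i : ℕ)) v = tc h' ζ v :=
    fun h' ζ v hv => avec_eq N (tc h' ζ) hv
  -- the two open sets
  have hU1open : IsOpen {c : Fin (N + 1) → ℂ | hankelDet (avec N c) p q ≠ 0} :=
    isOpen_compl_singleton.preimage (continuous_HF N p q)
  have hU2open : IsOpen
      ({x : (Fin (N + 1) → ℂ) × ℂ × ℂ |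
          (padeDenomPoly (avec N x.1) x.2.1 p q).eval x.2.2 ≠ 0} ∩
        {x : (Fin (N + 1) → ℂ) × ℂ × ℂ |
          ‖(padeNumPoly (avec N x.1) x.2.1 p q).eval x.2.2 -
              fj.eval x.2.2 * (padeDenomPoly (avec N x.1) x.2.1 p q).eval x.2.2‖ <
            t * ‖(padeDenomPoly (avec N x.1) x.2.1 p q).eval x.2.2‖}) := by
    refine IsOpen.inter (isOpen_compl_singleton.preimage (continuous_DF N p q)) ?_
    refine isOpen_lt (Continuous.norm ?_) (continuous_const.mul (continuous_DF N p q).norm)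
    exact (continuous_NF N p q).sub
      ((fj.continuous.comp (continuous_snd.comp continuous_snd)).mul (continuous_DF N p q))
  -- compact images
  have hS1 : IsCompact (cvec '' L) := hL.image_of_continuousOn (hcvecCont.mono hLΩ)
  have hS2 : IsCompact ((fun w : ℂ × ℂ => (cvec w.1, w.1, w.2)) '' (L ×ˢ K)) := by
    refine (hL.prod hK).image_of_continuousOn ?_
    refine ContinuousOn.prodMk ?_
      (continuous_fst.continuousOn.prodMk continuous_snd.continuousOn)
    exact hcvecCont.comp continuous_fst.continuousOn fun w hw => hLΩ hw.1
  -- inclusions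
  have hS1U : cvec '' L ⊆ {c : Fin (N + 1) → ℂ | hankelDet (avec N c) p q ≠ 0} := by
    rintro _ ⟨ζ, hζ, rfl⟩
    show hankelDet (avec N (cvec ζ)) p q ≠ 0
    rw [hankelDet_congr (fun v hv => hagree f ζ v hv)]
    exact hH ζ hζ
  have hS2U : ((fun w : ℂ × ℂ => (cvec w.1, w.1, w.2)) '' (L ×ˢ K)) ⊆
      ({x : (Fin (N + 1) → ℂ) × ℂ × ℂ |
          (padeDenomPoly (avec N x.1) x.2.1 p q).eval x.2.2 ≠ 0} ∩
        {x : (Fin (N + 1) → ℂ) × ℂ × ℂ |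
          ‖(padeNumPoly (avec N x.1) x.2.1 p q).eval x.2.2 -
              fj.eval x.2.2 * (padeDenomPoly (avec N x.1) x.2.1 p q).eval x.2.2‖ <
            t * ‖(padeDenomPoly (avec N x.1) x.2.1 p q).eval x.2.2‖}) := by
    rintro _ ⟨w, hw, rfl⟩
    have hζ : w.1 ∈ L := hw.1
    have hz : w.2 ∈ K := hw.2
    have hDcongr : padeDenomPoly (avec N (cvec w.1)) w.1 p q =
        padeDenomPoly (tc f w.1) w.1 p q :=
      padeDenomPoly_congr (fun v hv => hagree f w.1 v hv) w.1
    have hNcongr : padeNumPoly (avec N (cvec w.1)) w.1 p q =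
        padeNumPoly (tc f w.1) w.1 p q :=
      padeNumPoly_congr (fun v hv => hagree f w.1 v hv) w.1
    have hD0 : (padeDenomPoly (tc f w.1) w.1 p q).eval w.2 ≠ 0 := hD w.1 hζ w.2 hz
    refine ⟨?_, ?_⟩
    · show (padeDenomPoly (avec N (cvec w.1)) w.1 p q).eval w.2 ≠ 0
      rw [hDcongr]; exact hD0
    · show ‖(padeNumPoly (avec N (cvec w.1)) w.1 p q).eval w.2 -
          fj.eval w.2 * (padeDenomPoly (avec N (cvec w.1)) w.1 p q).eval w.2‖ <
        t * ‖(padeDenomPoly (avec N (cvec w.1)) w.1 p q).eval w.2‖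
      rw [hDcongr, hNcongr]
      set A := (padeNumPoly (tc f w.1) w.1 p q).eval w.2 with hA
      set B := (padeDenomPoly (tc f w.1) w.1 p q).eval w.2 with hB
      have hsup' : ‖A / B - fj.eval w.2‖ ≤ b := by
        have h0 : padeVal f w.1 p q w.2 = A / B := rfl
        have := hsup w.1 hζ w.2 hz
        rw [h0] at this
        exact this
      have hre : A - fj.eval w.2 * B = (A / B - fj.eval w.2) * B := by
        field_simp
      rw [hre, norm_mul]
      have hBpos : 0 < ‖B‖ := norm_pos_iff.mpr hD0
      calc ‖A / B - fj.eval w.2‖ * ‖B‖ ≤ b * ‖B‖ :=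
            mul_le_mul_of_nonneg_right hsup' hBpos.le
        _ < t * ‖B‖ := mul_lt_mul_of_pos_right htb hBpos
  obtain ⟨δ₁, hδ₁, hsub1⟩ := hS1.exists_cthickening_subset_open hU1open hS1U
  obtain ⟨δ₂, hδ₂, hsub2⟩ := hS2.exists_cthickening_subset_open hU2open hS2U
  set δ := min δ₁ δ₂ with hδdef
  have hδ0 : 0 < δ := lt_min hδ₁ hδ₂
  set C : ℝ := (max 1 r⁻¹) ^ N with hC
  have hC1 : (1 : ℝ) ≤ C := one_le_pow₀ (le_max_left _ _)
  have hC0 : (0 : ℝ) < C := lt_of_lt_of_le one_pos hC1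
  refine ⟨δ / C, div_pos hδ0 hC0, ?_⟩
  intro g hgd hclose
  -- coefficient perturbation bound
  have hcoefb : ∀ ζ ∈ L, ∀ v : ℕ, v ≤ N → ‖tc g ζ v - tc f ζ v‖ ≤ δ := by
    intro ζ hζ v hv
    have hballL : closedBall ζ r ⊆ Metric.cthickening r L :=
      closedBall_subset_cthickening hζ r
    have hsubΩ : closedBall ζ r ⊆ Ω := hballL.trans hLt
    have hbd : ∀ z ∈ closedBall ζ r, ‖g z - f z‖ ≤ δ / C := by
      intro z hz
      rw [norm_sub_rev]
      exact (hclose z (hballL hz)).le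
    have h1 : ‖tc (fun z => g z - f z) ζ v‖ ≤ (δ / C) * r⁻¹ ^ v :=
      tc_bound hr0 ((hgd.sub hfd).mono hsubΩ) hbd v
    have h2 : tc g ζ v - tc f ζ v = tc (fun z => g z - f z) ζ v :=
      tc_sub hΩ hgd hfd (hLΩ hζ) v
    rw [h2]
    refine h1.trans ?_
    have h3 : r⁻¹ ^ v ≤ C := by
      calc r⁻¹ ^ v ≤ (max 1 r⁻¹) ^ v :=
            pow_le_pow_left₀ (inv_nonneg.mpr hr0.le) (le_max_right _ _) v
        _ ≤ (max 1 r⁻¹) ^ N := pow_le_pow_right₀ (le_max_left _ _) hv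
    calc (δ / C) * r⁻¹ ^ v ≤ (δ / C) * C :=
          mul_le_mul_of_nonneg_left h3 (div_pos hδ0 hC0).le
      _ = δ := div_mul_cancel₀ δ hC0.ne'
  have hdist : ∀ ζ ∈ L, dist (fun v : Fin (N + 1) => tc g ζ (v : ℕ)) (cvec ζ) ≤ δ := by
    intro ζ hζ
    rw [dist_pi_le_iff hδ0.le]
    intro v
    rw [dist_eq_norm]
    exact hcoefb ζ hζ v (Nat.lt_succ_iff.mp v.2)
  -- membership in U2 for all relevant points
  have hU2mem : ∀ ζ ∈ L, ∀ z ∈ K,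
      (padeDenomPoly (tc g ζ) ζ p q).eval z ≠ 0 ∧
        ‖(padeNumPoly (tc g ζ) ζ p q).eval z -
            fj.eval z * (padeDenomPoly (tc g ζ) ζ p q).eval z‖ <
          t * ‖(padeDenomPoly (tc g ζ) ζ p q).eval z‖ := by
    intro ζ hζ z hz
    have hmem : ((fun v : Fin (N + 1) => tc g ζ (v : ℕ)), ζ, z) ∈
        Metric.cthickening δ₂ ((fun w : ℂ × ℂ => (cvec w.1, w.1, w.2)) '' (L ×ˢ K)) := by
      refine Metric.mem_cthickening_of_dist_le _ (cvec ζ, ζ, z) δ₂ _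
        ⟨(ζ, z), ⟨hζ, hz⟩, rfl⟩ ?_
      rw [Prod.dist_eq]
      refine max_le ((hdist ζ hζ).trans (min_le_right _ _)) ?_
      simp [hδ₂.le]
    have hmemU := hsub2 hmem
    have hDcongr : padeDenomPoly (avec N (fun v : Fin (N + 1) => tc g ζ (v : ℕ))) ζ p q =
        padeDenomPoly (tc g ζ) ζ p q :=
      padeDenomPoly_congr (fun v hv => hagree g ζ v hv) ζ
    have hNcongr : padeNumPoly (avec N (fun v : Fin (N + 1) => tc g ζ (v : ℕ))) ζ p q =
        padeNumPoly (tc g ζ) ζ p q :=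
      padeNumPoly_congr (fun v hv => hagree g ζ v hv) ζ
    obtain ⟨h1, h2⟩ := hmemU
    rw [mem_setOf_eq] at h1 h2
    dsimp only at h1 h2
    rw [hDcongr] at h1
    rw [hDcongr, hNcongr] at h2
    exact ⟨h1, h2⟩
  refine ⟨hgd, ?_, ?_, t, hts, ?_⟩
  · -- Hankel determinants nonzero
    intro ζ hζ
    have hmem : (fun v : Fin (N + 1) => tc g ζ (v : ℕ)) ∈
        Metric.cthickening δ₁ (cvec '' L) :=
      Metric.mem_cthickening_of_dist_le _ (cvec ζ) δ₁ _ ⟨ζ, hζ, rfl⟩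
        ((hdist ζ hζ).trans (min_le_left _ _))
    have h1 := hsub1 hmem
    rw [mem_setOf_eq] at h1
    rwa [hankelDet_congr (fun v hv => hagree g ζ v hv)] at h1
  · -- denominators nonzero on K
    intro ζ hζ z hz
    exact (hU2mem ζ hζ z hz).1
  · -- sup bound
    intro ζ hζ z hz
    obtain ⟨h1, h2⟩ := hU2mem ζ hζ z hz
    set A := (padeNumPoly (tc g ζ) ζ p q).eval z with hA
    set B := (padeDenomPoly (tc g ζ) ζ p q).eval z with hB
    have h0 : padeVal g ζ p q z = A / B := rfl
    rw [h0]
    have hre : A / B - fj.eval z = (A - fj.eval z * B) / B := by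
      field_simp
    rw [hre, norm_div]
    have hBpos : 0 < ‖B‖ := norm_pos_iff.mpr h1
    rw [div_le_iff₀ hBpos]
    exact h2.le
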